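/- Let F be a free group on generators x₁, …, x_{2n} (n ≥ 1). Then the orientable surface group G = ⟨x₁,…,x_{2n} | [x₁,x₂]⋯[x_{2n−1},x_{2n}] = 1⟩ is isomorphic to the group G' = ⟨x₁,…,x_{2n} | x₁⋯x_{2n}·x₁⁻¹⋯x_{2n}⁻¹ = 1⟩. -/

import Mathlib

open scoped commutatorElement

/-- The relator `[x₁,x₂]⋯[x_{2n-1},x_{2n}]` in the free group on `2n` letters. -/
def surfRel1 (n : ℕ) : FreeGroup (Fin (2 * n)) :=
  (List.ofFn (fun i : Fin n =>
    ⁅FreeGroup.of (⟨2 * i.val, by have := i.isLt; omega⟩ : Fin (2 * n)),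
      FreeGroup.of (⟨2 * i.val + 1, by have := i.isLt; omega⟩ : Fin (2 * n))⁆)).prod

/-- The relator `x₁⋯x_{2n} · x₁⁻¹⋯x_{2n}⁻¹` in the free group on `2n` letters. -/
def surfRel2 (n : ℕ) : FreeGroup (Fin (2 * n)) :=
  (List.ofFn (fun i : Fin (2 * n) => FreeGroup.of i)).prod *
  (List.ofFn (fun i : Fin (2 * n) => (FreeGroup.of i)⁻¹)).prod

namespace SurfaceIsoAux

/-- `i`-th generator, as a total function on `ℕ`. -/
def gen (n i : ℕ) : FreeGroup (Fin (2 * n)) :=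
  if h : i < 2 * n then FreeGroup.of ⟨i, h⟩ else 1

lemma gen_lt (n : ℕ) {i : ℕ} (h : i < 2 * n) : gen n i = FreeGroup.of ⟨i, h⟩ := dif_pos h

/-- `x₀ x₁ ⋯ x_{k-1}`. -/
def A (n k : ℕ) : FreeGroup (Fin (2 * n)) := ((List.range k).map (gen n)).prod

/-- `x₀⁻¹ x₁⁻¹ ⋯ x_{k-1}⁻¹`. -/
def B (n k : ℕ) : FreeGroup (Fin (2 * n)) := ((List.range k).map (fun i => (gen n i)⁻¹)).prod

/-- `[x₀,x₁]⋯[x_{2k-2},x_{2k-1}]`. -/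
def C (n k : ℕ) : FreeGroup (Fin (2 * n)) :=
  ((List.range k).map (fun j => ⁅gen n (2 * j), gen n (2 * j + 1)⁆)).prod

lemma A_succ (n k : ℕ) : A n (k + 1) = A n k * gen n k := by
  simp [A, List.range_succ]

lemma B_succ (n k : ℕ) : B n (k + 1) = B n k * (gen n k)⁻¹ := by
  simp [B, List.range_succ]

lemma C_succ (n k : ℕ) : C n (k + 1) = C n k * ⁅gen n (2 * k), gen n (2 * k + 1)⁆ := by
  simp [C, List.range_succ]

/-- The substitution `x_{2k} ↦ B_{2k} x_{2k}`, `x_{2k+1} ↦ x_{2k+1} B_{2k}⁻¹`. -/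
def psi (n : ℕ) : FreeGroup (Fin (2 * n)) →* FreeGroup (Fin (2 * n)) :=
  FreeGroup.lift (fun i : Fin (2 * n) =>
    if i.val % 2 = 0 then B n i.val * FreeGroup.of i
    else FreeGroup.of i * (B n (i.val - 1))⁻¹)

/-- The inverse substitution. -/
def psi' (n : ℕ) : FreeGroup (Fin (2 * n)) →* FreeGroup (Fin (2 * n)) :=
  FreeGroup.lift (fun i : Fin (2 * n) =>
    if i.val % 2 = 0 then (B n i.val)⁻¹ * FreeGroup.of i
    else FreeGroup.of i * B n (i.val - 1))

lemma psi_gen_even (n k : ℕ) (h : 2 * k < 2 * n) :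
    psi n (gen n (2 * k)) = B n (2 * k) * gen n (2 * k) := by
  rw [gen_lt n h]
  simp [psi, Nat.mul_mod_right]

lemma psi_gen_odd (n k : ℕ) (h : 2 * k + 1 < 2 * n) :
    psi n (gen n (2 * k + 1)) = gen n (2 * k + 1) * (B n (2 * k))⁻¹ := by
  rw [gen_lt n h]
  have h2 : (2 * k + 1) % 2 = 1 := by omega
  simp [psi, h2]

lemma psi'_gen_even (n k : ℕ) (h : 2 * k < 2 * n) :
    psi' n (gen n (2 * k)) = (B n (2 * k))⁻¹ * gen n (2 * k) := by
  rw [gen_lt n h]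
  simp [psi', Nat.mul_mod_right]

lemma psi'_gen_odd (n k : ℕ) (h : 2 * k + 1 < 2 * n) :
    psi' n (gen n (2 * k + 1)) = gen n (2 * k + 1) * B n (2 * k) := by
  rw [gen_lt n h]
  have h2 : (2 * k + 1) % 2 = 1 := by omega
  simp [psi', h2]

lemma psi_B (n k : ℕ) (h : k ≤ n) : psi n (B n (2 * k)) = B n (2 * k) := by
  induction k with
  | zero => simp [B]
  | succ k ih =>
    have h1 : 2 * k < 2 * n := by omega
    have h2 : 2 * k + 1 < 2 * n := by omega
    have e : 2 * (k + 1) = (2 * k + 1) + 1 := by ring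
    rw [e, B_succ, B_succ, map_mul, map_mul, map_inv, map_inv,
      psi_gen_even n k h1, psi_gen_odd n k h2, ih (by omega)]
    group

lemma psi'_B (n k : ℕ) (h : k ≤ n) : psi' n (B n (2 * k)) = B n (2 * k) := by
  induction k with
  | zero => simp [B]
  | succ k ih =>
    have h1 : 2 * k < 2 * n := by omega
    have h2 : 2 * k + 1 < 2 * n := by omega
    have e : 2 * (k + 1) = (2 * k + 1) + 1 := by ring
    rw [e, B_succ, B_succ, map_mul, map_mul, map_inv, map_inv,
      psi'_gen_even n k h1, psi'_gen_odd n k h2, ih (by omega)]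
    group

lemma of_eq_gen (n : ℕ) (i : Fin (2 * n)) : FreeGroup.of i = gen n i.val := by
  rw [gen_lt n i.isLt]

lemma psi_psi'_of (n : ℕ) (i : Fin (2 * n)) :
    psi n (psi' n (FreeGroup.of i)) = FreeGroup.of i := by
  rw [of_eq_gen]
  rcases Nat.even_or_odd i.val with ⟨k, hk⟩ | ⟨k, hk⟩
  · have hk' : i.val = 2 * k := by omega
    have h1 : 2 * k < 2 * n := by rw [← hk']; exact i.isLt
    rw [hk', psi'_gen_even n k h1, map_mul, map_inv, psi_B n k (by omega),
      psi_gen_even n k h1]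
    group
  · have hk' : i.val = 2 * k + 1 := by omega
    have h2 : 2 * k + 1 < 2 * n := by rw [← hk']; exact i.isLt
    rw [hk', psi'_gen_odd n k h2, map_mul, psi_B n k (by omega),
      psi_gen_odd n k h2]
    group

lemma psi'_psi_of (n : ℕ) (i : Fin (2 * n)) :
    psi' n (psi n (FreeGroup.of i)) = FreeGroup.of i := by
  rw [of_eq_gen]
  rcases Nat.even_or_odd i.val with ⟨k, hk⟩ | ⟨k, hk⟩
  · have hk' : i.val = 2 * k := by omega
    have h1 : 2 * k < 2 * n := by rw [← hk']; exact i.isLt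
    rw [hk', psi_gen_even n k h1, map_mul, psi'_B n k (by omega),
      psi'_gen_even n k h1]
    group
  · have hk' : i.val = 2 * k + 1 := by omega
    have h2 : 2 * k + 1 < 2 * n := by rw [← hk']; exact i.isLt
    rw [hk', psi_gen_odd n k h2, map_mul, map_inv, psi'_B n k (by omega),
      psi'_gen_odd n k h2]
    group

lemma psi_psi' (n : ℕ) : (psi n).comp (psi' n) = MonoidHom.id _ :=
  FreeGroup.ext_hom _ _ (fun a => by simpa using psi_psi'_of n a)

lemma psi'_psi (n : ℕ) : (psi' n).comp (psi n) = MonoidHom.id _ :=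
  FreeGroup.ext_hom _ _ (fun a => by simpa using psi'_psi_of n a)

/-- The automorphism of the free group. -/
def e (n : ℕ) : FreeGroup (Fin (2 * n)) ≃* FreeGroup (Fin (2 * n)) where
  toFun := psi' n
  invFun := psi n
  left_inv := fun x => DFunLike.congr_fun (psi_psi' n) x
  right_inv := fun x => DFunLike.congr_fun (psi'_psi n) x
  map_mul' := map_mul _

/-- The key identity: `psi` carries `A_{2k} B_{2k}` to the product of commutators `C_k`. -/
lemma psi_main (n k : ℕ) (h : k ≤ n) : psi n (A n (2 * k) * B n (2 * k)) = C n k := by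
  induction k with
  | zero => simp [A, B, C]
  | succ k ih =>
    have h1 : 2 * k < 2 * n := by omega
    have h2 : 2 * k + 1 < 2 * n := by omega
    have hB := psi_B n k (by omega)
    have ihh := ih (by omega)
    rw [map_mul, hB] at ihh
    have hA : psi n (A n (2 * k)) = C n k * (B n (2 * k))⁻¹ := eq_mul_inv_of_mul_eq ihh
    have e : 2 * (k + 1) = (2 * k + 1) + 1 := by ring
    rw [e, A_succ, A_succ, B_succ, B_succ, C_succ]
    simp only [map_mul, map_inv, psi_gen_even n k h1, psi_gen_odd n k h2, hA, hB]
    rw [commutatorElement_def]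
    group

lemma ofFn_eq_range {M : Type*} (m : ℕ) (f : Fin m → M) (g : ℕ → M)
    (h : ∀ i : Fin m, f i = g i.val) : List.ofFn f = (List.range m).map g := by
  induction m with
  | zero => simp
  | succ m ih =>
    rw [List.ofFn_succ', List.range_succ, List.concat_eq_append, List.map_append,
      ih _ (fun i => h i.castSucc)]
    simp [h (Fin.last m)]

lemma rel2_eq (n : ℕ) : surfRel2 n = A n (2 * n) * B n (2 * n) := by
  unfold surfRel2 A B
  rw [ofFn_eq_range _ _ (gen n) (fun i => (of_eq_gen n i)),
    ofFn_eq_range _ _ (fun i => (gen n i)⁻¹) (fun i => by rw [of_eq_gen n i])]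

lemma rel1_eq (n : ℕ) : surfRel1 n = C n n := by
  unfold surfRel1 C
  rw [ofFn_eq_range _ _ (fun j => ⁅gen n (2 * j), gen n (2 * j + 1)⁆) ?_]
  intro i
  have hi1 : 2 * i.val < 2 * n := by have := i.isLt; omega
  have hi2 : 2 * i.val + 1 < 2 * n := by have := i.isLt; omega
  simp only [gen_lt n hi1, gen_lt n hi2]

lemma psi_rel2 (n : ℕ) : psi n (surfRel2 n) = surfRel1 n := by
  rw [rel2_eq, rel1_eq, psi_main n n le_rfl]

lemma e_rel1 (n : ℕ) : e n (surfRel1 n) = surfRel2 n := by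
  have := psi_rel2 n
  calc e n (surfRel1 n) = psi' n (psi n (surfRel2 n)) := by rw [this]; rfl
    _ = surfRel2 n := psi'_psi_of' n _
  where psi'_psi_of' (n : ℕ) (x : FreeGroup (Fin (2 * n))) :
      psi' n (psi n x) = x := DFunLike.congr_fun (psi'_psi n) x

end SurfaceIsoAux

/-- for `n ≥ 1`, the orientable surface group
`⟨x₁,…,x_{2n} ∣ [x₁,x₂]⋯[x_{2n-1},x_{2n}]⟩` is isomorphic to
`⟨x₁,…,x_{2n} ∣ x₁⋯x_{2n} x₁⁻¹⋯x_{2n}⁻¹⟩`. -/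
theorem surface_group_iso (n : ℕ) (hn : 1 ≤ n) :
    Nonempty (PresentedGroup ({surfRel1 n} : Set (FreeGroup (Fin (2 * n)))) ≃*
      PresentedGroup ({surfRel2 n} : Set (FreeGroup (Fin (2 * n))))) := by
  refine ⟨QuotientGroup.congr _ _ (SurfaceIsoAux.e n)
    ((Subgroup.map_normalClosure {surfRel1 n} (SurfaceIsoAux.e n).toMonoidHom
      (SurfaceIsoAux.e n).surjective).trans ?_)⟩
  rw [Set.image_singleton]
  simp [SurfaceIsoAux.e_rel1]
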